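/- An irreflexive oriented graph G has an ios-injective homomorphism to the directed 3-cycle C_3 if and only if neither H_3 nor H_3^c is a subgraph of G and every directed cycle in G has length divisible by 3 (equivalently, if and only if none of H_3, H_3^c, and the directed cycles C_n with n not congruent to 0 modulo 3 is a subgraph of G). -/

import Mathlib

/-- A homomorphism of directed graphs (given as binary relations). -/
def IsHom {A : Type} {B : Type} (R : A → A → Prop) (S : B → B → Prop) (f : A → B) : Prop :=
  ∀ x y, R x y → S (f x) (f y)

/-- ios-injectivity: injective on in-neighbourhoods and on out-neighbourhoods separately. -/
def IosInj {A : Type} {B : Type} (R : A → A → Prop) (f : A → B) : Prop :=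
  ∀ x : A, Set.InjOn f {y | R y x} ∧ Set.InjOn f {y | R x y}

/-- iot-injectivity: injective on the union of in- and out-neighbourhoods. -/
def IotInj {A : Type} {B : Type} (R : A → A → Prop) (f : A → B) : Prop :=
  ∀ x : A, Set.InjOn f ({y | R y x} ∪ {y | R x y})

/-- An oriented graph: between two distinct vertices at most one arc. -/
def IsOriented {A : Type} (R : A → A → Prop) : Prop :=
  ∀ x y, x ≠ y → ¬(R x y ∧ R y x)

/-- Irreflexive (no loops). -/
def NoLoops {A : Type} (R : A → A → Prop) : Prop := ∀ x, ¬ R x x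

/-- `R` is (isomorphic to) a subgraph of `S`: an injective arc-preserving map. -/
def Subg {A : Type} {B : Type} (R : A → A → Prop) (S : B → B → Prop) : Prop :=
  ∃ g : A → B, Function.Injective g ∧ IsHom R S g

/-- There exists an ios-injective homomorphism of `R` to `S`. -/
def IosHomEx {A : Type} {B : Type} (R : A → A → Prop) (S : B → B → Prop) : Prop :=
  ∃ g : A → B, IsHom R S g ∧ IosInj R g

/-- There exists an iot-injective homomorphism of `R` to `S`. -/
def IotHomEx {A : Type} {B : Type} (R : A → A → Prop) (S : B → B → Prop) : Prop :=
  ∃ g : A → B, IsHom R S g ∧ IotInj R g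

/-- Converse (all arcs reversed). -/
def convRel {A : Type} (R : A → A → Prop) : A → A → Prop := fun x y => R y x

/-- Transitive tournament `T_n`. -/
def TTrel (n : ℕ) : Fin n → Fin n → Prop := fun i j => i < j

/-- Reflexive transitive tournament `T_2^r`. -/
def T2r : Fin 2 → Fin 2 → Prop := fun i j => i ≤ j

/-- Reflexive one-vertex tournament `T_1^r`. -/
def T1r : PUnit → PUnit → Prop := fun _ _ => True

/-- Directed path `P_N` on `N` vertices. -/
def DPathRel (N : ℕ) : Fin N → Fin N → Prop := fun x y => (y : ℕ) = (x : ℕ) + 1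

/-- Directed cycle `C_m` on `m` vertices. -/
def DCycRel (m : ℕ) : Fin m → Fin m → Prop := fun x y => (y : ℕ) = ((x : ℕ) + 1) % m

/-- Oriented path on `n+1` vertices: edge `t` (between `v_t` and `v_{t+1}`) is
oriented forwards iff `σ t = true`. -/
def OPathRel (n : ℕ) (σ : ℕ → Bool) : Fin (n + 1) → Fin (n + 1) → Prop :=
  fun x y => ∃ t : ℕ, t < n ∧
    ((σ t = true ∧ (x : ℕ) = t ∧ (y : ℕ) = t + 1) ∨
     (σ t = false ∧ (x : ℕ) = t + 1 ∧ (y : ℕ) = t))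

/-- Oriented cycle on `m` vertices: edge `t` (between `v_t` and `v_{t+1 mod m}`) is
oriented forwards iff `σ t = true`. -/
def OCycRel (m : ℕ) (σ : ℕ → Bool) : Fin m → Fin m → Prop :=
  fun x y => ∃ t : ℕ, t < m ∧
    ((σ t = true ∧ (x : ℕ) = t ∧ (y : ℕ) = (t + 1) % m) ∨
     (σ t = false ∧ (x : ℕ) = (t + 1) % m ∧ (y : ℕ) = t))

/-- The hat `H_3`: arcs `v_0 → v_1` and `v_2 → v_1`. -/
def H3rel : Fin 3 → Fin 3 → Prop := fun i j => (i = 0 ∧ j = 1) ∨ (i = 2 ∧ j = 1)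

/-- `H_4`: arcs `h_0 → h_3`, `h_1 → h_3`, `h_2 → h_3`. -/
def H4rel : Fin 4 → Fin 4 → Prop := fun i j => (i = 0 ∨ i = 1 ∨ i = 2) ∧ j = 3

/-- `A_4`: arcs `h_0 → h_2`, `h_1 → h_2`, `h_2 → h_3`. -/
def A4rel : Fin 4 → Fin 4 → Prop := fun i j => ((i = 0 ∨ i = 1) ∧ j = 2) ∨ (i = 2 ∧ j = 3)

/-- `H_5`: two directed paths of length two with a common initial vertex `0`:
arcs `0→1`, `1→2`, `0→3`, `3→4`. -/
def H5rel : Fin 5 → Fin 5 → Prop :=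
  fun i j => (i = 0 ∧ j = 1) ∨ (i = 1 ∧ j = 2) ∨ (i = 0 ∧ j = 3) ∨ (i = 3 ∧ j = 4)

/-- `B_2`: arcs `a→b`, `c→b`, `c→d`, `e→d` (vertices `a,b,c,d,e = 0,1,2,3,4`). -/
def B2rel : Fin 5 → Fin 5 → Prop :=
  fun i j => (i = 0 ∧ j = 1) ∨ (i = 2 ∧ j = 1) ∨ (i = 2 ∧ j = 3) ∨ (i = 4 ∧ j = 3)

/-- `X_2`: orientation of `K_{1,4}` with centre `0` of in-degree 2 and out-degree 2:
arcs `1→0`, `2→0`, `0→3`, `0→4`. -/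
def X2rel : Fin 5 → Fin 5 → Prop :=
  fun i j => ((i = 1 ∨ i = 2) ∧ j = 0) ∨ (i = 0 ∧ (j = 3 ∨ j = 4))

/-- An orientation of the star `K_{1,3}`: centre `none`, leaves `some i`;
edge `i` points away from the centre iff `ε i = true`. -/
def starRel (ε : Fin 3 → Bool) : Option (Fin 3) → Option (Fin 3) → Prop :=
  fun u v => ∃ i : Fin 3,
    (ε i = true ∧ u = none ∧ v = some i) ∨ (ε i = false ∧ u = some i ∧ v = none)

/-- An oriented `k`-colouring: for arcs `xy` and `vw`, `f x = f w → f y ≠ f v`. -/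
def OrCol {A : Type} (R : A → A → Prop) {k : ℕ} (f : A → Fin k) : Prop :=
  ∀ x y v w, R x y → R v w → f x = f w → f y ≠ f v

/-- Proper: distinct adjacent vertices get different colours. -/
def ProperCol {A : Type} {B : Type} (R : A → A → Prop) (f : A → B) : Prop :=
  ∀ x y, R x y → x ≠ y → f x ≠ f y

/-- Disjoint union of two directed graphs. -/
def sumRel {A B : Type} (R : A → A → Prop) (S : B → B → Prop) : A ⊕ B → A ⊕ B → Prop
  | Sum.inl a, Sum.inl a' => R a a'
  | Sum.inr b, Sum.inr b' => S b b'
  | _, _ => False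

/-- Net-length of the oriented cycle on `m` vertices with orientation `σ`:
number of forwards arcs minus number of backwards arcs. -/
def netLen (m : ℕ) (σ : ℕ → Bool) : ℤ :=
  (((Finset.range m).filter fun t => σ t = true).card : ℤ) -
    (((Finset.range m).filter fun t => σ t = false).card : ℤ)

/-- Undirected connectivity relation of a directed graph. -/
def UConn {V : Type} (E : V → V → Prop) : V → V → Prop :=
  Relation.ReflTransGen (fun a b => E a b ∨ E b a)

/-- The relation induced on the connected component of `x`. -/
def componentRel {V : Type} (E : V → V → Prop) (x : V) :
    {y : V // UConn E x y} → {y : V // UConn E x y} → Prop :=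
  fun a b => E a.val b.val

/-- Isomorphism of directed graphs. -/
def IsoRel {A B : Type} (R : A → A → Prop) (S : B → B → Prop) : Prop :=
  ∃ e : A ≃ B, ∀ a a', R a a' ↔ S (e a) (e a')

/-- An alternating matching in the oriented path on `n+1` vertices (edges `0,…,n-1`,
orientations `σ`): `μ t` means edge `t` is in the matching.  It is a matching,
saturates every internal (degree-two) vertex, and consecutive matching edges have
opposite orientations. -/
def PathAltMatching (n : ℕ) (σ : ℕ → Bool) (μ : ℕ → Prop) : Prop :=
  (∀ t, μ t → t < n) ∧
  (∀ t, ¬(μ t ∧ μ (t + 1))) ∧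
  (∀ v, 1 ≤ v → v + 1 ≤ n → (μ (v - 1) ∨ μ v)) ∧
  (∀ t t', μ t → μ t' → t < t' → (∀ s, t < s → s < t' → ¬ μ s) → σ t ≠ σ t')

/-- An alternating matching in the oriented cycle on `m` vertices (edges mod `m`):
a matching saturating every vertex whose successive edges (cyclically) have
opposite orientations. -/
def CycAltMatching (m : ℕ) (σ : ℕ → Bool) (μ : ℕ → Prop) : Prop :=
  (∀ t, μ t → t < m) ∧
  (∀ t, t < m → ¬(μ t ∧ μ ((t + 1) % m))) ∧
  (∀ v, v < m → (μ v ∨ μ ((v + m - 1) % m))) ∧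
  (∀ t d, t < m → 0 < d → d < m → μ t → μ ((t + d) % m) →
    (∀ s, 0 < s → s < d → ¬ μ ((t + s) % m)) → σ t ≠ σ ((t + d) % m))
namespace Stmt6Aux

variable {V : Type}

/-- Directed walks of length `n`. -/
inductive Fwd (E : V → V → Prop) : ℕ → V → V → Prop
  | refl (a : V) : Fwd E 0 a a
  | cons {n : ℕ} {a b c : V} : E a b → Fwd E n b c → Fwd E (n + 1) a c

variable {E : V → V → Prop}

lemma Fwd.snoc {n a b c} (h : Fwd E n a b) (hbc : E b c) : Fwd E (n + 1) a c := by
  induction h with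
  | refl a => exact Fwd.cons hbc (Fwd.refl c)
  | cons hE h ih => exact Fwd.cons hE (ih hbc)

lemma Fwd.cases_succ {n a c} (h : Fwd E (n + 1) a c) : ∃ b, E a b ∧ Fwd E n b c := by
  cases h with
  | cons hE h => exact ⟨_, hE, h⟩

lemma Fwd.zero_eq {a c} (h : Fwd E 0 a c) : a = c := by cases h; rfl

lemma Fwd.snoc_inv {n a c} (h : Fwd E (n + 1) a c) : ∃ b, Fwd E n a b ∧ E b c := by
  induction n generalizing a with
  | zero =>
    obtain ⟨b, hE, h0⟩ := h.cases_succ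
    cases h0; exact ⟨a, Fwd.refl a, hE⟩
  | succ n ih =>
    obtain ⟨x, hE, hx⟩ := h.cases_succ
    obtain ⟨b, hb, hbc⟩ := ih hx
    exact ⟨b, Fwd.cons hE hb, hbc⟩

lemma Fwd.trans {n m a b c} (h1 : Fwd E n a b) (h2 : Fwd E m b c) : Fwd E (n + m) a c := by
  induction h1 with
  | refl a => simpa using h2
  | cons hE h ih =>
    rw [Nat.succ_add]
    exact Fwd.cons hE (ih h2)

lemma Fwd.split {m a c} (n : ℕ) (h : Fwd E (n + m) a c) : ∃ b, Fwd E n a b ∧ Fwd E m b c := by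
  induction n generalizing a with
  | zero => exact ⟨a, Fwd.refl a, by simpa using h⟩
  | succ n ih =>
    rw [Nat.succ_add] at h
    obtain ⟨x, hE, hx⟩ := h.cases_succ
    obtain ⟨b, hb, hbc⟩ := ih hx
    exact ⟨b, Fwd.cons hE hb, hbc⟩

section Deg

variable (hout : ∀ x u w, E x u → E x w → u = w) (hin : ∀ x u w, E u x → E w x → u = w)

include hout in
lemma Fwd.det {n a b c} (h1 : Fwd E n a b) (h2 : Fwd E n a c) : b = c := by
  induction n generalizing a with
  | zero => cases h1; cases h2; rfl
  | succ n ih =>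
    obtain ⟨x, hx, h1'⟩ := h1.cases_succ
    obtain ⟨y, hy, h2'⟩ := h2.cases_succ
    cases hout a x y hx hy
    exact ih h1' h2'

open Classical in
/-- The successor function (choice). -/
noncomputable def succ (E : V → V → Prop) : V → V :=
  fun v => if h : ∃ w, E v w then h.choose else v

include hout in
lemma succ_spec {v w : V} (h : E v w) : succ E v = w := by
  have he : ∃ w, E v w := ⟨w, h⟩
  rw [succ, dif_pos he]
  exact hout v _ _ he.choose_spec h

include hout in
lemma Fwd.iterate {n a b} (h : Fwd E n a b) : (succ E)^[n] a = b := by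
  induction h with
  | refl a => rfl
  | cons hE h ih =>
    rw [Function.iterate_succ_apply, succ_spec hout hE]
    exact ih

include hout in
lemma Fwd.prefix {m a b} (h : Fwd E m a b) {i : ℕ} (hi : i ≤ m) :
    Fwd E i a ((succ E)^[i] a) := by
  obtain ⟨k, rfl⟩ := Nat.exists_eq_add_of_le hi
  obtain ⟨x, hx, -⟩ := h.split i
  rwa [hx.iterate hout]

include hout in
lemma edge_of_closed {m b} (h : Fwd E m b b) {i : ℕ} (hi : i < m) :
    E ((succ E)^[i] b) ((succ E)^[i+1] b) := by
  obtain ⟨k, hk⟩ : ∃ k, m = i + (k + 1) := ⟨m - i - 1, by omega⟩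
  rw [hk] at h
  obtain ⟨x, hx, h2⟩ := h.split i
  obtain ⟨y, hy, -⟩ := h2.cases_succ
  rw [Function.iterate_succ_apply', hx.iterate hout, succ_spec hout hy]
  exact hy

end Deg

section Main

variable (hout : ∀ x u w, E x u → E x w → u = w) (hin : ∀ x u w, E u x → E w x → u = w)
  (hcyc : ∀ m : ℕ, 1 ≤ m → Subg (DCycRel m) E → 3 ∣ m)

include hout hcyc in
/-- Closed directed walks have length divisible by 3. -/
lemma closed_dvd {k b} (h : Fwd E k b b) : 3 ∣ k := by
  rcases Nat.eq_zero_or_pos k with rfl | hk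
  · exact ⟨0, rfl⟩
  -- minimal positive period
  have hP : ∃ n, 0 < n ∧ Fwd E n b b := ⟨k, hk, h⟩
  classical
  set m := Nat.find hP with hm
  obtain ⟨hm0, hmb⟩ : 0 < m ∧ Fwd E m b b := Nat.find_spec hP
  -- m divides any closed walk length
  have hdvd : ∀ j, Fwd E j b b → m ∣ j := by
    intro j
    induction j using Nat.strong_induction_on with
    | _ j ih =>
      intro hj
      rcases Nat.eq_zero_or_pos j with rfl | hj0
      · exact ⟨0, rfl⟩
      have hmj : m ≤ j := Nat.find_min' hP ⟨hj0, hj⟩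
      obtain ⟨r, rfl⟩ := Nat.exists_eq_add_of_le hmj
      obtain ⟨x, hx, h2⟩ := hj.split m
      cases hmb.det hout hx
      rcases Nat.eq_zero_or_pos r with rfl | hr0
      · exact ⟨1, by omega⟩
      have := ih r (by omega) h2
      exact (Nat.dvd_add_right (dvd_refl m)).mpr this
  -- the minimal period yields a cycle subgraph
  have hinj : ∀ i j, i < j → j < m → (succ E)^[i] b ≠ (succ E)^[j] b := by
    intro i j hij hjm heq
    have hmb2 : Fwd E (j + (m - j)) b b := by
      have hh : j + (m - j) = m := by omega
      rw [hh]; exact hmb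
    obtain ⟨y, hy, h2⟩ := hmb2.split j
    have hyeq : (succ E)^[j] b = y := hy.iterate hout
    have h1 : Fwd E i b ((succ E)^[i] b) := hmb.prefix hout (by omega)
    rw [heq, hyeq] at h1
    have hcl : Fwd E (i + (m - j)) b b := h1.trans h2
    have : m ≤ i + (m - j) := Nat.find_min' hP ⟨by omega, hcl⟩
    omega
  have hsubg : Subg (DCycRel m) E := by
    refine ⟨fun i => (succ E)^[(i : ℕ)] b, ?_, ?_⟩
    · intro i j hij
      rcases Nat.lt_trichotomy (i : ℕ) (j : ℕ) with h | h | h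
      · exact absurd hij (hinj _ _ h j.isLt)
      · exact Fin.ext h
      · exact absurd hij.symm (hinj _ _ h i.isLt)
    · intro i j hij
      have hival : (i : ℕ) < m := i.isLt
      have hedge : E ((succ E)^[(i : ℕ)] b) ((succ E)^[(i : ℕ)+1] b) :=
        edge_of_closed hout hmb hival
      have hmfix : (succ E)^[m] b = b := hmb.iterate hout
      show E ((succ E)^[(i : ℕ)] b) ((succ E)^[(j : ℕ)] b)
      have hj' : (succ E)^[(j : ℕ)] b = (succ E)^[(i : ℕ)+1] b := by
        rcases Nat.lt_or_ge ((i : ℕ) + 1) m with h | h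
        · rw [hij, Nat.mod_eq_of_lt h]
        · have h1 : (i : ℕ) + 1 = m := by omega
          rw [hij, h1, Nat.mod_self]
          simpa using hmfix.symm
      rw [hj']
      exact hedge
  have h3m : 3 ∣ m := hcyc m hm0 hsubg
  exact h3m.trans (hdvd k h)

/-- Net potential between two vertices. -/
def Pot (E : V → V → Prop) (a b : V) (d : ZMod 3) : Prop :=
  ∃ n : ℕ, (Fwd E n a b ∧ d = (n : ZMod 3)) ∨ (Fwd E n b a ∧ d = -(n : ZMod 3))

include hout hcyc in
lemma fwd_congr {n n' : ℕ} {a b : V} (h1 : Fwd E n a b) (h2 : Fwd E n' a b) :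
    (n : ZMod 3) = (n' : ZMod 3) := by
  wlog hle : n ≤ n' generalizing n n'
  · exact (this h2 h1 (by omega)).symm
  obtain ⟨r, rfl⟩ := Nat.exists_eq_add_of_le hle
  obtain ⟨x, hx, hr⟩ := h2.split n
  cases h1.det hout hx
  have : 3 ∣ r := closed_dvd hout hcyc hr
  have : ((r : ℕ) : ZMod 3) = 0 := (ZMod.natCast_eq_zero_iff r 3).mpr this
  push_cast
  rw [this, add_zero]

include hout hcyc in
lemma fwd_anti {n n' : ℕ} {a b : V} (h1 : Fwd E n a b) (h2 : Fwd E n' b a) :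
    (n : ZMod 3) = -(n' : ZMod 3) := by
  have : 3 ∣ n + n' := closed_dvd hout hcyc (h1.trans h2)
  have h0 : ((n + n' : ℕ) : ZMod 3) = 0 := (ZMod.natCast_eq_zero_iff _ 3).mpr this
  push_cast at h0
  linear_combination h0

include hout hcyc in
lemma pot_unique {a b : V} {d d' : ZMod 3} (h1 : Pot E a b d) (h2 : Pot E a b d') :
    d = d' := by
  obtain ⟨n, ⟨hw, rfl⟩ | ⟨hw, rfl⟩⟩ := h1 <;> obtain ⟨n', ⟨hw', rfl⟩ | ⟨hw', rfl⟩⟩ := h2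
  · exact fwd_congr hout hcyc hw hw'
  · exact fwd_anti hout hcyc hw hw'
  · have := fwd_anti hout hcyc hw' hw
    linear_combination -this
  · have := fwd_congr hout hcyc hw hw'
    linear_combination -this

include hout hin in
lemma reach {a b : V} (h : UConn E a b) : ∃ n, Fwd E n a b ∨ Fwd E n b a := by
  induction h with
  | refl => exact ⟨0, Or.inl (Fwd.refl a)⟩
  | tail hab hstep ih =>
    rename_i b c
    obtain ⟨n, hn | hn⟩ := ih
    · rcases hstep with hbc | hcb
      · exact ⟨n + 1, Or.inl (hn.snoc hbc)⟩
      · rcases Nat.eq_zero_or_pos n with rfl | hn0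
        · cases hn.zero_eq; exact ⟨1, Or.inr (Fwd.cons hcb (Fwd.refl _))⟩
        · obtain ⟨k, rfl⟩ : ∃ k, n = k + 1 := ⟨n - 1, by omega⟩
          obtain ⟨x, hx, hxb⟩ := hn.snoc_inv
          cases hin b x c hxb hcb
          exact ⟨k, Or.inl hx⟩
    · rcases hstep with hbc | hcb
      · rcases Nat.eq_zero_or_pos n with rfl | hn0
        · cases hn.zero_eq; exact ⟨1, Or.inl (Fwd.cons hbc (Fwd.refl _))⟩
        · obtain ⟨k, rfl⟩ : ∃ k, n = k + 1 := ⟨n - 1, by omega⟩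
          obtain ⟨y, hy, hya⟩ := hn.cases_succ
          cases hout b y c hy hbc
          exact ⟨k, Or.inr hya⟩
      · exact ⟨n + 1, Or.inr (Fwd.cons hcb hn)⟩

end Main

/-- Setoid of undirected connectivity. -/
def uconnSetoid (E : V → V → Prop) : Setoid V :=
  ⟨UConn E, ⟨fun _ => Relation.ReflTransGen.refl,
    fun h => (@Relation.ReflTransGen.symmetric _ _ ⟨fun _ _ h' => h'.symm⟩).symm _ _ h,
    fun h h' => Relation.ReflTransGen.trans h h'⟩⟩

end Stmt6Aux

/-- An irreflexive oriented graph `G` has an ios-injective homomorphism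
to the directed 3-cycle `C_3` iff neither `H_3` nor `H_3^c` is a subgraph of `G` and
every directed cycle in `G` has length divisible by 3; equivalently iff none of
`H_3`, `H_3^c` and `C_n` (`n` not ≡ 0 mod 3) is a subgraph of `G`. -/
theorem stmt6 {V : Type} (E : V → V → Prop) (hor : IsOriented E) (hirr : NoLoops E) :
    ((∃ f : V → Fin 3, IsHom E (DCycRel 3) f ∧ IosInj E f) ↔
        (¬ Subg H3rel E ∧ ¬ Subg (convRel H3rel) E ∧
          ∀ m : ℕ, 1 ≤ m → Subg (DCycRel m) E → 3 ∣ m)) ∧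
    ((∃ f : V → Fin 3, IsHom E (DCycRel 3) f ∧ IosInj E f) ↔
        ¬ (Subg H3rel E ∨ Subg (convRel H3rel) E ∨
            ∃ m : ℕ, 1 ≤ m ∧ ¬ 3 ∣ m ∧ Subg (DCycRel m) E)) := by
  classical
  have main : (∃ f : V → Fin 3, IsHom E (DCycRel 3) f ∧ IosInj E f) ↔
      (¬ Subg H3rel E ∧ ¬ Subg (convRel H3rel) E ∧
        ∀ m : ℕ, 1 ≤ m → Subg (DCycRel m) E → 3 ∣ m) := by
    constructor
    · rintro ⟨f, hf, hio⟩
      refine ⟨?_, ?_, ?_⟩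
      · rintro ⟨g, ginj, ghom⟩
        have h01 : E (g 0) (g 1) := ghom 0 1 (Or.inl ⟨rfl, rfl⟩)
        have h21 : E (g 2) (g 1) := ghom 2 1 (Or.inr ⟨rfl, rfl⟩)
        have e0 : ((f (g 1)) : ℕ) = ((f (g 0) : ℕ) + 1) % 3 := hf _ _ h01
        have e2 : ((f (g 1)) : ℕ) = ((f (g 2) : ℕ) + 1) % 3 := hf _ _ h21
        have heq : f (g 0) = f (g 2) := by
          have h0 := (f (g 0)).isLt
          have h2 := (f (g 2)).isLt
          exact Fin.ext (by omega)
        have := (hio (g 1)).1 (show g 0 ∈ {y | E y (g 1)} from h01) h21 heq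
        exact (by decide : (0 : Fin 3) ≠ 2) (ginj this)
      · rintro ⟨g, ginj, ghom⟩
        have h10 : E (g 1) (g 0) := ghom 1 0 (Or.inl ⟨rfl, rfl⟩)
        have h12 : E (g 1) (g 2) := ghom 1 2 (Or.inr ⟨rfl, rfl⟩)
        have e0 : ((f (g 0)) : ℕ) = ((f (g 1) : ℕ) + 1) % 3 := hf _ _ h10
        have e2 : ((f (g 2)) : ℕ) = ((f (g 1) : ℕ) + 1) % 3 := hf _ _ h12
        have heq : f (g 0) = f (g 2) := Fin.ext (by omega)
        have := (hio (g 1)).2 (show g 0 ∈ {y | E (g 1) y} from h10) h12 heq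
        exact (by decide : (0 : Fin 3) ≠ 2) (ginj this)
      · rintro m hm ⟨g, ginj, ghom⟩
        have hmpos : 0 < m := hm
        set F : ℕ → ZMod 3 := fun i => ((f (g ⟨i % m, Nat.mod_lt _ hmpos⟩) : ℕ) : ZMod 3)
          with hF
        have hstep : ∀ i, F (i + 1) = F i + 1 := by
          intro i
          have harc : DCycRel m ⟨i % m, Nat.mod_lt _ hmpos⟩ ⟨(i + 1) % m, Nat.mod_lt _ hmpos⟩ :=
            (Nat.mod_add_mod i m 1).symm
          have hE := ghom _ _ harc
          have := hf _ _ hE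
          show ((f (g ⟨(i + 1) % m, _⟩) : ℕ) : ZMod 3) = _
          rw [this]
          rw [ZMod.natCast_mod]
          push_cast
          rfl
        have hiter : ∀ i, F i = F 0 + (i : ZMod 3) := by
          intro i
          induction i with
          | zero => simp
          | succ n ih => rw [hstep, ih]; push_cast; ring
        have hFm : F m = F 0 := by
          have : (⟨m % m, Nat.mod_lt _ hmpos⟩ : Fin m) = ⟨0 % m, Nat.mod_lt _ hmpos⟩ :=
            Fin.ext (by simp)
          simp only [hF, this]
        have : ((m : ℕ) : ZMod 3) = 0 := by
          have h := hiter m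
          rw [hFm] at h
          linear_combination -h
        exact (ZMod.natCast_eq_zero_iff m 3).mp this
    · rintro ⟨h3, h3c, hcyc⟩
      have hin : ∀ x u w, E u x → E w x → u = w := by
        intro x u w hu hw
        by_contra hne
        apply h3
        have hux : u ≠ x := fun h => hirr x (h ▸ hu)
        have hwx : w ≠ x := fun h => hirr x (h ▸ hw)
        have hxu : x ≠ u := hux.symm
        have hxw : x ≠ w := hwx.symm
        have hne' : w ≠ u := fun h => hne h.symm
        refine ⟨fun i => if i = 0 then u else if i = 1 then x else w, ?_, ?_⟩
        · intro i j hij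
          fin_cases i <;> fin_cases j <;> simp_all
        · rintro i j (⟨hi, hj⟩ | ⟨hi, hj⟩) <;> subst hi <;> subst hj <;> simpa
      have hout : ∀ x u w, E x u → E x w → u = w := by
        intro x u w hu hw
        by_contra hne
        apply h3c
        have hux : u ≠ x := fun h => hirr x (h ▸ hu)
        have hwx : w ≠ x := fun h => hirr x (h ▸ hw)
        have hxu : x ≠ u := hux.symm
        have hxw : x ≠ w := hwx.symm
        have hne' : w ≠ u := fun h => hne h.symm
        refine ⟨fun i => if i = 0 then u else if i = 1 then x else w, ?_, ?_⟩
        · intro i j hij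
          fin_cases i <;> fin_cases j <;> simp_all
        · rintro i j (⟨hj, hi⟩ | ⟨hj, hi⟩) <;> subst hi <;> subst hj <;> simpa
      set S := Stmt6Aux.uconnSetoid E with hS
      set rep : V → V := fun v => (Quotient.mk S v).out with hrepdef
      have hrep : ∀ v, UConn E (rep v) v := fun v =>
        Quotient.exact ((Quotient.mk S v).out_eq)
      have hrepeq : ∀ {x y : V}, UConn E x y → rep x = rep y := by
        intro x y h
        simp only [hrepdef]
        exact congrArg Quotient.out (Quotient.sound h)
      have hex : ∀ v, ∃ dv : ZMod 3, Stmt6Aux.Pot E (rep v) v dv := by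
        intro v
        obtain ⟨n, hn | hn⟩ := Stmt6Aux.reach hout hin (hrep v)
        · exact ⟨(n : ZMod 3), n, Or.inl ⟨hn, rfl⟩⟩
        · exact ⟨-(n : ZMod 3), n, Or.inr ⟨hn, rfl⟩⟩
      choose d hd using hex
      have hstep : ∀ {x y}, E x y → d y = d x + 1 := by
        intro x y hxy
        have hre : rep y = rep x :=
          (hrepeq (Relation.ReflTransGen.single (Or.inl hxy))).symm
        have hpot : Stmt6Aux.Pot E (rep y) y (d x + 1) := by
          rw [hre]
          obtain ⟨n, ⟨hw, hdx⟩ | ⟨hw, hdx⟩⟩ := hd x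
          · exact ⟨n + 1, Or.inl ⟨hw.snoc hxy, by rw [hdx]; push_cast; ring⟩⟩
          · rcases n with _ | k
            · have hxe : x = rep x := hw.zero_eq
              rw [← hxe]
              refine ⟨1, Or.inl ⟨Stmt6Aux.Fwd.cons hxy (Stmt6Aux.Fwd.refl y), ?_⟩⟩
              rw [hdx]; push_cast; ring
            · obtain ⟨z, hz, hzk⟩ := hw.cases_succ
              cases hout x z y hz hxy
              refine ⟨k, Or.inr ⟨hzk, ?_⟩⟩
              rw [hdx]; push_cast; ring
        exact Stmt6Aux.pot_unique hout hcyc (hd y) hpot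
      refine ⟨fun v => ⟨(d v).val, ZMod.val_lt _⟩, ?_, ?_⟩
      · intro x y hxy
        show (d y).val = ((d x).val + 1) % 3
        rw [hstep hxy, ZMod.val_add]
        congr 1
      · intro x
        exact ⟨fun u hu w hw _ => hin x u w hu hw, fun u hu w hw _ => hout x u w hu hw⟩
  refine ⟨main, main.trans ?_⟩
  constructor
  · rintro ⟨h1, h2, h3⟩ (h | h | ⟨m, hm1, hm3, hms⟩)
    exacts [h1 h, h2 h, hm3 (h3 m hm1 hms)]
  · intro h
    refine ⟨fun ha => h (Or.inl ha), fun hb => h (Or.inr (Or.inl hb)), fun m hm hs => ?_⟩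
    by_contra hc
    exact h (Or.inr (Or.inr ⟨m, hm, hc, hs⟩))
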